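/- arXiv:2107.02699 — 4 statements merged into one kernel-verified Lean document; each statement's English description precedes it below -/
import Mathlib

section
/- If λ ∈ (1/2, 1) is the reciprocal of a Pisot number and b ≥ 2 is an integer, then log b / log λ is irrational. -/
open Polynomial in
/-- If `λ ∈ (1/2, 1)` is the reciprocal of a Pisot number (an algebraic integer `β > 1`
all of whose Galois conjugates have modulus `< 1`) and `b ≥ 2` is an integer, then
`log b / log λ` is irrational. -/
theorem stmt_0 (β lam : ℝ) (hβ : 1 < β) (hint : IsIntegral ℤ β)
    (hconj : ∀ z : ℂ, Polynomial.aeval z (minpoly ℚ β) = 0 → z ≠ (β : ℂ) →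
      ‖z‖ < 1)
    (hlam : lam = β⁻¹) (hmem : lam ∈ Set.Ioo (1/2 : ℝ) 1)
    (b : ℕ) (hb : 2 ≤ b) :
    Irrational (Real.log b / Real.log lam) := by
  by_contra hirr
  rw [Irrational] at hirr
  push_neg at hirr
  obtain ⟨r, hr⟩ := hirr
  have hβ0 : (0:ℝ) < β := by linarith
  have hβ2 : β < 2 := by
    have h2 : (1:ℝ)/2 < β⁻¹ := hlam ▸ hmem.1
    have h3 : β⁻¹ * β = 1 := inv_mul_cancel₀ (ne_of_gt hβ0)
    nlinarith
  -- logs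
  have hb1 : (1:ℝ) < (b:ℝ) := by exact_mod_cast lt_of_lt_of_le one_lt_two (by exact_mod_cast hb)
  have hlogb : 0 < Real.log b := Real.log_pos hb1
  have hlam0 : 0 < lam := by rw [hlam]; positivity
  have hloglam : Real.log lam < 0 := Real.log_neg hlam0 hmem.2
  have hloglamβ : Real.log lam = - Real.log β := by rw [hlam, Real.log_inv]
  have hlogβ : 0 < Real.log β := Real.log_pos hβ
  -- r * log lam = log b
  have hre : (r:ℝ) * Real.log lam = Real.log b := by
    rw [hr, div_mul_cancel₀ _ (ne_of_lt hloglam)]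
  have hrneg : r < 0 := by
    by_contra hrn
    push_neg at hrn
    have : (0:ℝ) ≤ (r:ℝ) := by exact_mod_cast hrn
    nlinarith
  have hnum : r.num < 0 := Rat.num_neg.mpr hrneg
  set pn : ℕ := (-r.num).toNat with hpn
  set qn : ℕ := r.den with hqn
  have hpn0 : 0 < pn := by rw [hpn]; omega
  have hqn0 : 0 < qn := r.pos
  have hpnum : (pn : ℝ) = -(r.num : ℝ) := by
    have : ((-r.num).toNat : ℤ) = -r.num := Int.toNat_of_nonneg (by omega)
    exact_mod_cast congrArg (Int.cast : ℤ → ℝ) this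
  -- pn * log β = qn * log b
  have hkey : (pn:ℝ) * Real.log β = (qn:ℝ) * Real.log b := by
    have hcast : (r:ℝ) = (r.num : ℝ) / (r.den : ℝ) := by rw [Rat.cast_def]
    have hden0 : ((r.den : ℝ)) ≠ 0 := by positivity
    rw [hcast, hloglamβ] at hre
    rw [hpnum, hqn]
    field_simp at hre ⊢
    linarith
  -- β ^ pn = b ^ qn
  have hpow : β ^ pn = (b:ℝ) ^ qn := by
    have h1 : Real.log (β ^ pn) = Real.log ((b:ℝ) ^ qn) := by
      rw [Real.log_pow, Real.log_pow]; exact_mod_cast hkey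
    exact Real.log_injOn_pos (by simp [Set.mem_Ioi]; positivity)
      (by simp [Set.mem_Ioi]; positivity) h1
  -- the polynomial X^pn - C (b^qn)
  set f : ℚ[X] := X ^ pn - C ((b:ℚ) ^ qn) with hf
  have hintQ : IsIntegral ℚ β := hint.tower_top
  have haevalf : aeval β f = 0 := by
    simp [hf, map_pow]
    push_cast
    rw [hpow]
    ring
  have hdvd : minpoly ℚ β ∣ f := minpoly.dvd ℚ β haevalf
  -- every complex root of minpoly equals β
  have hroot : ∀ z : ℂ, aeval z (minpoly ℚ β) = 0 → z = (β:ℂ) := by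
    intro z hz
    by_contra hne
    have habs : ‖z‖ < 1 := hconj z hz hne
    obtain ⟨g, hg⟩ := hdvd
    have hzf : aeval z f = 0 := by
      have : aeval z f = aeval z (minpoly ℚ β) * aeval z g := by rw [hg, map_mul]
      rw [this, hz, zero_mul]
    have hzpow : z ^ pn = ((b:ℂ)) ^ qn := by
      have := hzf
      simp [hf, map_pow, sub_eq_zero] at this
      push_cast at this
      exact this
    have h1 : ‖z‖ ^ pn = (b:ℝ) ^ qn := by
      rw [← norm_pow, hzpow]
      rw [norm_pow]
      simp
    have h2 : (2:ℝ) ≤ (b:ℝ) ^ qn := by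
      calc (2:ℝ) = 2 ^ 1 := (pow_one 2).symm
      _ ≤ (2:ℝ) ^ qn := pow_le_pow_right₀ one_le_two hqn0
      _ ≤ (b:ℝ) ^ qn := by
          apply pow_le_pow_left₀ (by norm_num) (by exact_mod_cast hb)
    have h3 : ‖z‖ ^ pn ≤ 1 := pow_le_one₀ (norm_nonneg z) habs.le
    linarith
  -- minpoly has degree 1 via roots over ℂ
  have hβroot : aeval (β:ℂ) (minpoly ℚ β) = 0 := by
    have h0 : aeval β (minpoly ℚ β) = 0 := minpoly.aeval ℚ β
    rw [show ((β:ℂ)) = algebraMap ℝ ℂ β from rfl, aeval_algebraMap_apply, h0, map_zero]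
  set P : ℂ[X] := (minpoly ℚ β).map (algebraMap ℚ ℂ) with hP
  have hmne : minpoly ℚ β ≠ 0 := minpoly.ne_zero hintQ
  have hPne : P ≠ 0 := Polynomial.map_ne_zero hmne
  have hsplits : P.Splits := IsAlgClosed.splits _
  have hcard : P.roots.card = (minpoly ℚ β).natDegree := by
    rw [← hsplits.natDegree_eq_card_roots, hP, natDegree_map]
  have hsep : P.Separable :=
    ((minpoly.irreducible hintQ).separable).map
  have hnodup : P.roots.Nodup := Polynomial.nodup_roots hsep
  have hsub : ∀ z ∈ P.roots, z = (β:ℂ) := by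
    intro z hz
    apply hroot
    have := Polynomial.isRoot_of_mem_roots hz
    rwa [Polynomial.IsRoot, hP, Polynomial.eval_map, ← aeval_def] at this
  have hcard1 : P.roots.card ≤ 1 := by
    have hrep : P.roots = Multiset.replicate P.roots.card ((β:ℝ):ℂ) :=
      Multiset.eq_replicate_card.mpr hsub
    have hc := (Multiset.nodup_iff_count_le_one.mp hnodup) ((β:ℝ):ℂ)
    rw [hrep, Multiset.count_replicate_self] at hc
    simpa using hc
  have hdeg1 : (minpoly ℚ β).natDegree = 1 := by
    have h0 := minpoly.natDegree_pos hintQ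
    rw [← hcard] at h0 ⊢
    omega
  have hmem' : β ∈ (algebraMap ℚ ℝ).range := (minpoly.natDegree_eq_one_iff).mp hdeg1
  obtain ⟨s, hs⟩ := hmem'
  have hsint : IsIntegral ℤ s := by
    rw [← isIntegral_algebraMap_iff (algebraMap ℚ ℝ).injective]
    rwa [show algebraMap ℚ ℝ s = β from hs]
  obtain ⟨m, hm⟩ := IsIntegrallyClosed.isIntegral_iff.mp hsint
  have hmβ : (m:ℝ) = β := by
    rw [← hs, ← hm]; push_cast; rfl
  have h1m : (1:ℝ) < (m:ℝ) := hmβ ▸ hβ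
  have hm2 : (m:ℝ) < 2 := hmβ ▸ hβ2
  have : (1:ℤ) < m := by exact_mod_cast h1m
  have : m < 2 := by exact_mod_cast hm2
  omega
end

section
/- Let ν be a Borel probability measure on ℝ and λ ∈ (0,1). Then for every r > 0 and every real l ≠ 0, ∫₀¹ |𝓕_l(S_{λ^{-t}} ν)|² dt ≤ 1/(r·|l|·log(λ^{-1})) + ∫ ν(B_r(y)) dν(y), where S_c denotes the pushforward of ν under multiplication by c, 𝓕_l(μ) = ∫ e^{2πi l x} dμ(x), and B_r(y) is the open ball of radius r around y. -/
open MeasureTheory Real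

open intervalIntegral in
private lemma osc_key (b L : ℝ) (hb : b ≠ 0) (hL : 0 < L) :
    ‖∫ t in (0:ℝ)..1,
      Complex.exp (2 * π * Complex.I * b * Real.exp (t * L))‖ ≤ 1 / (π * |b| * L) := by
  set K : ℂ := 2 * π * Complex.I * b with hK
  have hKne : K ≠ 0 := by
    simp [hK, Complex.ext_iff, Complex.I_ne_zero, pi_ne_zero, hb, mul_ne_zero]
  have hLne : (L:ℂ) ≠ 0 := by exact_mod_cast hL.ne'
  set u : ℝ → ℂ := fun t => (K * L)⁻¹ * (Real.exp (-(t * L)) : ℝ) with hu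
  set u' : ℝ → ℂ := fun t => -K⁻¹ * (Real.exp (-(t * L)) : ℝ) with hu'
  set v : ℝ → ℂ := fun t => Complex.exp (K * Real.exp (t * L)) with hv
  set v' : ℝ → ℂ := fun t => (K * L * Real.exp (t * L)) * Complex.exp (K * Real.exp (t * L)) with hv'
  have hud : ∀ t ∈ Set.uIcc (0:ℝ) 1, HasDerivAt u (u' t) t := by
    intro t _
    have h1 : HasDerivAt (fun t : ℝ => Real.exp (-(t * L))) (-L * Real.exp (-(t * L))) t := by
      have := (Real.hasDerivAt_exp (-(t*L))).comp t
        (((hasDerivAt_id t).mul_const L).neg)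
      simpa [mul_comm, Function.comp_def] using this
    have h2 := h1.ofReal_comp.const_mul ((K * L)⁻¹)
    convert h2 using 1
    case e'_9 =>
      rw [hu']
      push_cast
      field_simp
    all_goals rfl
  have hvd : ∀ t ∈ Set.uIcc (0:ℝ) 1, HasDerivAt v (v' t) t := by
    intro t _
    have h1 : HasDerivAt (fun t : ℝ => Real.exp (t * L)) (L * Real.exp (t * L)) t := by
      have := (Real.hasDerivAt_exp (t*L)).comp t ((hasDerivAt_id t).mul_const L)
      simpa [mul_comm, Function.comp_def] using this
    have h2 := (h1.ofReal_comp.const_mul K).cexp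
    convert h2 using 1
    simp [hv']
    ring
  have hucont : Continuous u' := by
    apply Continuous.mul continuous_const
    exact Complex.continuous_ofReal.comp (Real.continuous_exp.comp (by continuity))
  have hvcont : Continuous v' := by
    have : Continuous fun t : ℝ => ((Real.exp (t*L) : ℝ) : ℂ) :=
      Complex.continuous_ofReal.comp (Real.continuous_exp.comp (by continuity))
    exact ((continuous_const.mul this).mul ((continuous_const.mul this).cexp))
  have key := intervalIntegral.integral_mul_deriv_eq_deriv_mul hud hvd
    (hucont.intervalIntegrable 0 1) (hvcont.intervalIntegrable 0 1)
  have huv : ∀ t, u t * v' t = v t := by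
    intro t
    simp only [hu, hv, hv']
    rw [show ((K * L)⁻¹ * (Real.exp (-(t * L)) : ℝ)) * ((K * L * Real.exp (t * L)) * Complex.exp (K * Real.exp (t * L)))
      = ((K*L)⁻¹ * (K*L)) * ((Real.exp (-(t*L)) * Real.exp (t*L) : ℝ)) * Complex.exp (K * Real.exp (t * L)) by push_cast; ring]
    rw [← Real.exp_add, inv_mul_cancel₀ (mul_ne_zero hKne hLne)]
    norm_num
  rw [show (fun t => u t * v' t) = v from funext huv] at key
  have habsK : ‖K‖ = 2 * π * |b| := by
    simp [hK, abs_of_pos Real.pi_pos, abs_of_pos (by norm_num : (0:ℝ) < 2)]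
  have h0re : ∀ c : ℝ, (K * (c:ℂ)).re = 0 := by
    intro c
    simp [hK, Complex.mul_re, Complex.mul_im]
  have habsv : ∀ t : ℝ, ‖v t‖ = 1 := by
    intro t
    simp only [hv, Complex.norm_exp, h0re, Real.exp_zero]
  have habsu : ∀ t : ℝ, ‖u t‖ = Real.exp (-(t*L)) / (2 * π * |b| * L) := by
    intro t
    have h1 : ‖u t‖
        = ‖(K * (L:ℂ))⁻¹‖ * ‖((Real.exp (-(t*L)) : ℝ) : ℂ)‖ :=
      norm_mul _ _
    rw [h1, norm_inv, norm_mul, habsK, Complex.norm_real, Complex.norm_real, Real.norm_eq_abs, Real.norm_eq_abs,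
      abs_of_pos hL, abs_of_nonneg (Real.exp_nonneg _), inv_mul_eq_div]
  have habsu' : ∀ t : ℝ, ‖u' t‖ = Real.exp (-(t*L)) / (2 * π * |b|) := by
    intro t
    simp only [hu', norm_mul, norm_neg, norm_inv, Complex.norm_real, Real.norm_eq_abs, habsK,
      abs_of_nonneg (Real.exp_nonneg _)]
    rw [inv_mul_eq_div]
  have hE : ∫ t in (0:ℝ)..1, Real.exp (-(t * L)) = (1 - Real.exp (-L)) / L := by
    rw [show (fun t : ℝ => Real.exp (-(t * L))) = fun t => Real.exp (t * (-L)) by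
      funext t; ring_nf]
    rw [intervalIntegral.integral_comp_mul_right Real.exp (neg_ne_zero.mpr hL.ne')]
    rw [integral_exp, smul_eq_mul]
    rw [one_mul, zero_mul, Real.exp_zero]
    rw [eq_div_iff hL.ne']
    rw [mul_comm, ← mul_assoc, show L * (-L)⁻¹ = -1 by field_simp]
    ring
  have hIbound : ‖∫ t in (0:ℝ)..1, u' t * v t‖
      ≤ (1 - Real.exp (-L)) / (2 * π * |b| * L) := by
    have h1 : ‖∫ t in (0:ℝ)..1, u' t * v t‖ ≤ ∫ t in (0:ℝ)..1, ‖u' t * v t‖ :=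
      intervalIntegral.norm_integral_le_integral_norm zero_le_one
    have h2 : ∀ t : ℝ, ‖u' t * v t‖ = Real.exp (-(t*L)) / (2 * π * |b|) := by
      intro t
      rw [show ‖u' t * v t‖ = ‖u' t‖ * ‖v t‖ from norm_mul _ _]
      rw [habsu', habsv, mul_one]
    calc ‖∫ t in (0:ℝ)..1, u' t * v t‖
        ≤ ∫ t in (0:ℝ)..1, ‖u' t * v t‖ := h1
      _ = ∫ t in (0:ℝ)..1, Real.exp (-(t*L)) / (2 * π * |b|) := by
          congr 1; funext t; exact h2 t
      _ = (∫ t in (0:ℝ)..1, Real.exp (-(t*L))) / (2 * π * |b|) := by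
          rw [intervalIntegral.integral_div]
      _ = (1 - Real.exp (-L)) / L / (2 * π * |b|) := by rw [hE]
      _ = (1 - Real.exp (-L)) / (2 * π * |b| * L) := by
          rw [div_div, mul_comm L _]
  have hA1 : ‖u 1 * v 1‖ = Real.exp (-(1*L)) / (2 * π * |b| * L) := by
    rw [norm_mul, habsu, habsv, mul_one]
  have hA0 : ‖u 0 * v 0‖ = Real.exp (-(0*L)) / (2 * π * |b| * L) := by
    rw [norm_mul, habsu, habsv, mul_one]
  calc ‖∫ t in (0:ℝ)..1, v t‖
      = ‖u 1 * v 1 - u 0 * v 0 - ∫ t in (0:ℝ)..1, u' t * v t‖ := by rw [key]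
    _ ≤ ‖u 1 * v 1 - u 0 * v 0‖
        + ‖∫ t in (0:ℝ)..1, u' t * v t‖ := norm_sub_le _ _
    _ ≤ (‖u 1 * v 1‖ + ‖u 0 * v 0‖)
        + (1 - Real.exp (-L)) / (2 * π * |b| * L) :=
        add_le_add (norm_sub_le _ _) hIbound
    _ = 1 / (π * |b| * L) := by
        rw [hA1, hA0]
        have hD : (0:ℝ) < 2 * π * |b| * L := by
          have : (0:ℝ) < |b| := abs_pos.mpr hb
          positivity
        simp only [one_mul, zero_mul, neg_zero, Real.exp_zero]
        rw [← add_div, ← add_div]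
        rw [show Real.exp (-L) + 1 + (1 - Real.exp (-L)) = 2 by ring]
        rw [div_eq_div_iff hD.ne' (by positivity : (0:ℝ) < π * |b| * L).ne']
        ring

/-- Hochman's lemma: for a Borel probability measure `ν` on `ℝ`, `λ ∈ (0,1)`, `r > 0`
and real `l ≠ 0`,
`∫₀¹ |𝓕_l(S_{λ^{-t}} ν)|² dt ≤ 1/(r·|l|·log λ⁻¹) + ∫ ν(B_r(y)) dν(y)`. -/
theorem stmt_5 (ν : Measure ℝ) [IsProbabilityMeasure ν]
    (lam : ℝ) (hlam : lam ∈ Set.Ioo (0:ℝ) 1) (r : ℝ) (hr : 0 < r) (l : ℝ) (hl : l ≠ 0) :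
    ∫ t in Set.Ioo (0:ℝ) 1,
        (‖(∫ x, Complex.exp (2 * π * Complex.I * l * x)
          ∂(Measure.map (fun x => lam ^ (-t) * x) ν))‖) ^ 2 ≤
      1 / (r * |l| * Real.log lam⁻¹) +
        ∫ y, (ν (Metric.ball y r)).toReal ∂ν := by
  obtain ⟨hlam0, hlam1⟩ := hlam
  set L : ℝ := Real.log lam⁻¹ with hLdef
  have hL : 0 < L := Real.log_pos (one_lt_inv_iff₀.mpr ⟨hlam0, hlam1⟩)
  have hc : ∀ t : ℝ, lam ^ (-t) = Real.exp (t * L) := by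
    intro t
    rw [Real.rpow_def_of_pos hlam0, hLdef, Real.log_inv]
    ring_nf
  set K : ℂ := 2 * π * Complex.I * l with hK
  set g : ℝ → ℝ × ℝ → ℂ :=
    fun t p => Complex.exp (K * (Real.exp (t * L) * (p.1 - p.2) : ℝ)) with hg
  set G : ℝ → ℝ × ℝ → ℝ := fun t p => (g t p).re with hG
  have h0re : ∀ c : ℝ, (K * (c:ℂ)).re = 0 := by
    intro c
    simp [hK, Complex.mul_re, Complex.mul_im]
  have hK2 : K = ((2 * π * l : ℝ) : ℂ) * Complex.I := by
    rw [hK]; push_cast; ring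
  have hconjK : (starRingEnd ℂ) K = -K := by
    rw [hK2, map_mul, Complex.conj_ofReal, Complex.conj_I]; ring
  have hgabs : ∀ t p, ‖g t p‖ = 1 := by
    intro t p
    rw [hg]
    simp only [Complex.norm_exp, h0re, Real.exp_zero]
  have hGle : ∀ t p, G t p ≤ 1 := fun t p =>
    (Complex.re_le_norm _).trans (le_of_eq (hgabs t p))
  have hGabs : ∀ t p, |G t p| ≤ 1 := by
    intro t p
    refine (Complex.abs_re_le_norm _).trans (le_of_eq (hgabs t p))
  have hgcont : Continuous (fun z : ℝ × (ℝ × ℝ) => g z.1 z.2) := by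
    apply Complex.continuous_exp.comp
    apply continuous_const.mul
    apply Complex.continuous_ofReal.comp
    exact ((Real.continuous_exp.comp (continuous_fst.mul continuous_const)).mul
      ((continuous_fst.comp continuous_snd).sub (continuous_snd.comp continuous_snd)))
  have hGcont : Continuous (fun z : ℝ × (ℝ × ℝ) => G z.1 z.2) :=
    Complex.continuous_re.comp hgcont
  -- step 1: pointwise identity in t
  have hpt : ∀ t : ℝ, (‖(∫ x, Complex.exp (2 * π * Complex.I * l * x)
      ∂(Measure.map (fun x => lam ^ (-t) * x) ν))‖) ^ 2
      = ∫ p, G t p ∂(ν.prod ν) := by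
    intro t
    have hmap : ∫ x, Complex.exp (2 * π * Complex.I * l * x)
        ∂(Measure.map (fun x => lam ^ (-t) * x) ν)
        = ∫ x, Complex.exp (K * (Real.exp (t * L) * x : ℝ)) ∂ν := by
      rw [integral_map (by fun_prop) (by
        exact (Complex.continuous_exp.comp (continuous_const.mul
          Complex.continuous_ofReal)).aestronglyMeasurable)]
      congr 1
      funext x
      rw [hc t, hK]
    set F : ℂ := ∫ x, Complex.exp (K * (Real.exp (t * L) * x : ℝ)) ∂ν with hF
    rw [hmap]
    have habs2 : (‖F‖) ^ 2 = (F * (starRingEnd ℂ) F).re := by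
      rw [Complex.mul_conj]
      simp [Complex.sq_norm]
    rw [habs2]
    have hconj : (starRingEnd ℂ) F
        = ∫ y, Complex.exp (-K * (Real.exp (t * L) * y : ℝ)) ∂ν := by
      rw [hF, ← integral_conj]
      congr 1
      funext y
      rw [← Complex.exp_conj]
      rw [map_mul, Complex.conj_ofReal, hconjK]
    have hprod : F * (starRingEnd ℂ) F = ∫ p, g t p ∂(ν.prod ν) := by
      rw [hconj, hF, ← integral_prod_mul]
      congr 1
      funext p
      rw [hg, ← Complex.exp_add]
      congr 1
      push_cast
      ring
    rw [hprod]
    have hint : Integrable (g t ·) (ν.prod ν) := by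
      refine (integrable_const (1:ℝ)).mono'
        ((hgcont.comp (Continuous.prodMk_right t)).aestronglyMeasurable) ?_
      exact Filter.Eventually.of_forall (fun p => le_of_eq (hgabs t p))
    have h := integral_re hint
    simp only [RCLike.re_to_complex] at h
    exact h.symm
  -- setup
  set S : Set (ℝ × ℝ) := {p | |p.1 - p.2| < r} with hSdef
  have hSmeas : MeasurableSet S :=
    (isOpen_lt (by fun_prop) continuous_const).measurableSet
  set ν2 : Measure (ℝ × ℝ) := ν.prod ν with hν2
  set μ1 : Measure ℝ := volume.restrict (Set.Ioc (0:ℝ) 1) with hμ1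
  haveI : IsProbabilityMeasure μ1 := by
    constructor
    rw [hμ1, Measure.restrict_apply_univ]
    simp
  have hgcont1 : ∀ p : ℝ × ℝ, Continuous (fun t => g t p) := by
    intro p
    simp only [hg]
    apply Complex.continuous_exp.comp
    apply continuous_const.mul
    apply Complex.continuous_ofReal.comp
    exact (Real.continuous_exp.comp (continuous_id.mul continuous_const)).mul continuous_const
  have hgint : ∀ p : ℝ × ℝ, Integrable (fun t => g t p) μ1 := by
    intro p
    refine (integrable_const (1:ℝ)).mono' (hgcont1 p).aestronglyMeasurable
      (Filter.Eventually.of_forall fun t => le_of_eq (hgabs t p))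
  have hGint : ∀ p : ℝ × ℝ, Integrable (fun t => G t p) μ1 := fun p => (hgint p).re
  have hswap_int : Integrable (Function.uncurry G) (μ1.prod ν2) := by
    refine (integrable_const (1:ℝ)).mono' hGcont.aestronglyMeasurable
      (Filter.Eventually.of_forall fun z => ?_)
    simpa [Real.norm_eq_abs, Function.uncurry_def] using hGabs z.1 z.2
  -- the pointwise oscillation bound
  have hpointwise : ∀ p : ℝ × ℝ, ∫ t, G t p ∂μ1
      ≤ S.indicator (fun _ => (1:ℝ)) p + 1 / (π * (r * |l|) * L) := by
    intro p
    have hconst : (0:ℝ) < π * (r * |l|) * L := by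
      have : (0:ℝ) < |l| := abs_pos.mpr hl
      positivity
    by_cases hpr : p ∈ S
    · rw [Set.indicator_of_mem hpr]
      have h1 : ∫ t, G t p ∂μ1 ≤ ∫ _t, (1:ℝ) ∂μ1 :=
        integral_mono (hGint p) (integrable_const 1) (fun t => hGle t p)
      have h2 : ∫ _t, (1:ℝ) ∂μ1 = 1 := by simp
      nlinarith [one_div_pos.mpr hconst]
    · rw [Set.indicator_of_notMem hpr, zero_add]
      have hd : r ≤ |p.1 - p.2| := not_lt.mp hpr
      have hdne : p.1 - p.2 ≠ 0 := by
        intro h; rw [h] at hd; simp at hd; linarith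
      have hb : l * (p.1 - p.2) ≠ 0 := mul_ne_zero hl hdne
      have h1 : ∫ t, G t p ∂μ1 = (∫ t, g t p ∂μ1).re := by
        have h := integral_re (hgint p)
        simp only [RCLike.re_to_complex] at h
        exact h
      have h3 : ∫ t, g t p ∂μ1 = ∫ t in (0:ℝ)..1, g t p := by
        rw [intervalIntegral.integral_of_le zero_le_one, hμ1]
      have h4 : (fun t => g t p)
          = fun t => Complex.exp (2 * π * Complex.I * ((l * (p.1 - p.2) : ℝ) : ℂ) * Real.exp (t * L)) := by
        funext t
        simp only [hg]
        apply congrArg Complex.exp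
        rw [hK]
        push_cast
        ring
      have h5 := osc_key (l * (p.1 - p.2)) L hb hL
      have h6 : ‖∫ t in (0:ℝ)..1, g t p‖ ≤ 1 / (π * |l * (p.1 - p.2)| * L) := by
        rw [show (∫ t in (0:ℝ)..1, g t p)
          = ∫ t in (0:ℝ)..1, Complex.exp (2 * π * Complex.I * ((l * (p.1 - p.2) : ℝ) : ℂ) * Real.exp (t * L)) by rw [h4]]
        exact h5
      have h7 : 1 / (π * |l * (p.1 - p.2)| * L) ≤ 1 / (π * (r * |l|) * L) := by
        apply one_div_le_one_div_of_le hconst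
        rw [abs_mul]
        have : (0:ℝ) < |l| := abs_pos.mpr hl
        have hπ : (0:ℝ) < π := pi_pos
        nlinarith
      calc ∫ t, G t p ∂μ1 = (∫ t, g t p ∂μ1).re := h1
        _ ≤ ‖∫ t, g t p ∂μ1‖ := Complex.re_le_norm _
        _ = ‖∫ t in (0:ℝ)..1, g t p‖ := by rw [h3]
        _ ≤ 1 / (π * |l * (p.1 - p.2)| * L) := h6
        _ ≤ 1 / (π * (r * |l|) * L) := h7
  -- the ν² mass of S
  have hprodS : (ν2 S).toReal = ∫ y, (ν (Metric.ball y r)).toReal ∂ν := by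
    have hslice : ∀ x : ℝ, Prod.mk x ⁻¹' S = Metric.ball x r := by
      intro x
      ext y
      simp [hSdef, Metric.mem_ball, Real.dist_eq, abs_sub_comm]
    have h1 : ν2 S = ∫⁻ x, ν (Metric.ball x r) ∂ν := by
      rw [hν2, Measure.prod_apply hSmeas]
      congr 1
      funext x
      rw [hslice x]
    rw [h1]
    refine (integral_toReal ?_ ?_).symm
    · have := measurable_measure_prodMk_left (ν := ν) hSmeas
      refine Measurable.aemeasurable ?_
      convert this using 1
      funext x
      rw [hslice x]
    · exact Filter.Eventually.of_forall fun x => measure_lt_top ν _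
  have hboundint : Integrable (fun p => S.indicator (fun _ => (1: ℝ)) p + 1 / (π * (r * |l|) * L)) ν2 :=
    ((integrable_const (1:ℝ)).indicator hSmeas).add (integrable_const _)
  -- put everything together
  calc ∫ t in Set.Ioo (0:ℝ) 1,
        (‖(∫ x, Complex.exp (2 * π * Complex.I * l * x)
          ∂(Measure.map (fun x => lam ^ (-t) * x) ν))‖) ^ 2
      = ∫ t in Set.Ioo (0:ℝ) 1, ∫ p, G t p ∂ν2 := by
        congr 1
        funext t
        exact hpt t
    _ = ∫ t, ∫ p, G t p ∂ν2 ∂μ1 := by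
        rw [hμ1, ← integral_Ioc_eq_integral_Ioo]
    _ = ∫ p, ∫ t, G t p ∂μ1 ∂ν2 := integral_integral_swap hswap_int
    _ ≤ ∫ p, (S.indicator (fun _ => (1:ℝ)) p + 1 / (π * (r * |l|) * L)) ∂ν2 :=
        integral_mono hswap_int.integral_prod_right hboundint hpointwise
    _ = (ν2 S).toReal + 1 / (π * (r * |l|) * L) := by
        rw [integral_add ((integrable_const (1:ℝ)).indicator hSmeas) (integrable_const _)]
        congr 1
        · exact integral_indicator_one hSmeas
        · simp
    _ ≤ 1 / (r * |l| * L) + ∫ y, (ν (Metric.ball y r)).toReal ∂ν := by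
        rw [hprodS]
        have hlpos : (0:ℝ) < |l| := abs_pos.mpr hl
        have h8 : 1 / (π * (r * |l|) * L) ≤ 1 / (r * |l| * L) := by
          apply one_div_le_one_div_of_le
          · positivity
          · have hπ : (1:ℝ) ≤ π := by nlinarith [pi_gt_three]
            calc r * |l| * L = 1 * (r * |l| * L) := by ring
              _ ≤ π * (r * |l| * L) :=
                  mul_le_mul_of_nonneg_right hπ (by positivity)
              _ = π * (r * |l|) * L := by ring
        linarith
end

section
/- A probability measure satisfying the self-similarity equation is unique: given contracting similarities φ_i(x) = λ_i x + t_i with 0 < |λ_i| < 1 and a probability vector (p_i), there is at most one Borel probability measure μ on ℝ with compact support satisfying μ = Σ_i p_i · (φ_i)_* μ. -/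
open MeasureTheory

/-- Uniqueness of the self-similar measure: given contracting similarities
`φ_i(x) = λ_i x + t_i` with `0 < |λ_i| < 1` and a probability vector `(p_i)`,
there is at most one compactly supported Borel probability measure `μ` on `ℝ` with
`μ = Σ_i p_i • (φ_i)_* μ`. -/
theorem stmt_12 {I : Type*} [Fintype I]
    (lam : I → ℝ) (hlam : ∀ i, 0 < |lam i| ∧ |lam i| < 1) (t : I → ℝ)
    (p : I → ENNReal) (hp : ∑ i, p i = 1)
    (μ ν : Measure ℝ) [IsProbabilityMeasure μ] [IsProbabilityMeasure ν]
    (hμc : ∃ K : Set ℝ, IsCompact K ∧ μ Kᶜ = 0)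
    (hνc : ∃ K : Set ℝ, IsCompact K ∧ ν Kᶜ = 0)
    (hμ : μ = ∑ i : I, p i • Measure.map (fun x => lam i * x + t i) μ)
    (hν : ν = ∑ i : I, p i • Measure.map (fun x => lam i * x + t i) ν) :
    μ = ν := by
  classical
  obtain ⟨K₀, hK₀c, hK₀μ⟩ := hμc
  obtain ⟨K₁, hK₁c, hK₁ν⟩ := hνc
  set K : Set ℝ := K₀ ∪ K₁ with hKdef
  have hKc : IsCompact K := hK₀c.union hK₁c
  have hμK : μ Kᶜ = 0 :=
    measure_mono_null (Set.compl_subset_compl.mpr Set.subset_union_left) hK₀μ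
  have hνK : ν Kᶜ = 0 :=
    measure_mono_null (Set.compl_subset_compl.mpr Set.subset_union_right) hK₁ν
  -- a uniform bound on K
  obtain ⟨r, hr⟩ := hKc.isBounded.subset_closedBall 0
  set R : ℝ := max r 0 with hRdef
  have hR0 : 0 ≤ R := le_max_right r 0
  have hRK : ∀ x ∈ K, |x| ≤ R := by
    intro x hx
    have := hr hx
    rw [Metric.mem_closedBall, Real.dist_eq, sub_zero] at this
    exact this.trans (le_max_left r 0)
  -- nonemptiness of I
  have hI : Nonempty I := by
    by_contra h
    rw [not_nonempty_iff] at h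
    simp at hp
  -- each p i is finite, and the real weights sum to 1
  have hple : ∀ i, p i ≤ 1 := fun i =>
    hp ▸ Finset.single_le_sum (fun j _ => zero_le) (Finset.mem_univ i)
  have hpt : ∀ i, p i ≠ ⊤ := fun i => ne_top_of_le_ne_top ENNReal.one_ne_top (hple i)
  have hsum1 : ∑ i, (p i).toReal = 1 := by
    rw [← ENNReal.toReal_sum (fun i _ => hpt i), hp, ENNReal.toReal_one]
  -- the maximal contraction ratio
  set lmax : ℝ := Finset.univ.sup' Finset.univ_nonempty (fun i => |lam i|) with hlmaxdef
  have hlle : ∀ i, |lam i| ≤ lmax := fun i =>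
    Finset.le_sup' (fun j => |lam j|) (Finset.mem_univ i)
  have hl1 : lmax < 1 := by
    rw [hlmaxdef, Finset.sup'_lt_iff]
    exact fun i _ => (hlam i).2
  have hl0 : 0 < lmax :=
    lt_of_lt_of_le (hlam (Classical.arbitrary I)).1 (hlle _)
  -- integrability of continuous functions against a measure vanishing outside K
  have hint : ∀ (τ : Measure ℝ) [IsProbabilityMeasure τ], τ Kᶜ = 0 →
      ∀ (g : ℝ → ℝ), Continuous g → Integrable g τ := by
    intro τ _ hτK g hg
    obtain ⟨C, hC⟩ := hKc.exists_bound_of_continuousOn hg.continuousOn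
    have haeK : ∀ᵐ x ∂τ, x ∈ K := by
      rw [← MeasureTheory.mem_ae_iff] at hτK
      exact hτK
    refine Integrable.mono' (integrable_const C) hg.aestronglyMeasurable ?_
    filter_upwards [haeK] with x hx using hC x hx
  -- the self-similarity step for integrals
  have key : ∀ (τ : Measure ℝ), IsProbabilityMeasure τ → τ Kᶜ = 0 →
      τ = ∑ i : I, p i • Measure.map (fun x => lam i * x + t i) τ →
      ∀ (f : ℝ → ℝ), Continuous f →
      ∫ x, f x ∂τ = ∑ i : I, (p i).toReal * ∫ x, f (lam i * x + t i) ∂τ := by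
    intro τ hτp hτK hτ f hf
    have hmi : ∀ i : I, Integrable f (p i • Measure.map (fun x => lam i * x + t i) τ) := by
      intro i
      have h1 : Integrable f (Measure.map (fun x => lam i * x + t i) τ) := by
        have hc : Continuous (fun x : ℝ => lam i * x + t i) :=
          (continuous_const.mul continuous_id').add continuous_const
        rw [integrable_map_measure hf.aestronglyMeasurable hc.measurable.aemeasurable]
        exact hint τ hτK _ (hf.comp hc)
      exact h1.smul_measure (hpt i)
    conv_lhs => rw [hτ]
    rw [integral_finset_sum_measure (fun i _ => hmi i)]
    refine Finset.sum_congr rfl fun i _ => ?_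
    have hc : Continuous (fun x : ℝ => lam i * x + t i) :=
      (continuous_const.mul continuous_id').add continuous_const
    rw [integral_smul_measure, integral_map hc.measurable.aemeasurable hf.aestronglyMeasurable]
    simp [smul_eq_mul]
  -- the "Wasserstein-like" quantity
  set S : Set ℝ := {s | ∃ f : ℝ → ℝ, LipschitzWith 1 f ∧ s = |∫ x, f x ∂μ - ∫ x, f x ∂ν|}
    with hSdef
  have hS0 : (0 : ℝ) ∈ S := by
    refine ⟨fun _ => 0, (LipschitzWith.const' 0).weaken zero_le_one, by simp⟩
  have hSbdd : BddAbove S := by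
    refine ⟨2 * R, fun s hs => ?_⟩
    obtain ⟨f, hf, rfl⟩ := hs
    have hintμ : Integrable f μ := hint μ hμK f hf.continuous
    have hintν : Integrable f ν := hint ν hνK f hf.continuous
    have hbd : ∀ (τ : Measure ℝ) [IsProbabilityMeasure τ], τ Kᶜ = 0 → Integrable f τ →
        |∫ x, f x ∂τ - f 0| ≤ R := by
      intro τ _ hτK hfτ
      have : ∫ x, f x ∂τ - f 0 = ∫ x, (f x - f 0) ∂τ := by
        rw [integral_sub hfτ (integrable_const _), integral_const]
        simp
      rw [this]
      have haeK : ∀ᵐ x ∂τ, x ∈ K := by rw [← MeasureTheory.mem_ae_iff] at hτK; exact hτK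
      have := norm_integral_le_of_norm_le_const (μ := τ) (C := R) (f := fun x => f x - f 0) ?_
      · simpa using this
      · filter_upwards [haeK] with x hx
        have h1 := hf.dist_le_mul x 0
        rw [Real.dist_eq, Real.dist_eq, sub_zero, NNReal.coe_one, one_mul] at h1
        have : ‖f x - f 0‖ = |f x - f 0| := rfl
        rw [this, ← Real.dist_eq]
        exact le_trans (by rw [Real.dist_eq]; exact h1) (hRK x hx)
    have h1 := hbd μ hμK hintμ
    have h2 := hbd ν hνK hintν
    have : |∫ x, f x ∂μ - ∫ x, f x ∂ν| ≤ |∫ x, f x ∂μ - f 0| + |∫ x, f x ∂ν - f 0| := by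
      rw [abs_sub_comm (∫ x, f x ∂ν) (f 0)] at *
      calc |∫ x, f x ∂μ - ∫ x, f x ∂ν|
          = |(∫ x, f x ∂μ - f 0) + (f 0 - ∫ x, f x ∂ν)| := by ring_nf
        _ ≤ _ := abs_add_le _ _
    linarith [abs_sub_comm (∫ x, f x ∂ν) (f 0)]
  set d : ℝ := sSup S with hddef
  have hd0 : 0 ≤ d := le_csSup hSbdd hS0
  -- contraction
  have hcontr : ∀ s ∈ S, s ≤ lmax * d := by
    rintro s ⟨f, hf, rfl⟩
    have hμint := key μ ‹_› hμK hμ f hf.continuous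
    have hνint := key ν ‹_› hνK hν f hf.continuous
    rw [hμint, hνint, ← Finset.sum_sub_distrib]
    have hterm : ∀ i : I,
        |∫ x, f (lam i * x + t i) ∂μ - ∫ x, f (lam i * x + t i) ∂ν| ≤ lmax * d := by
      intro i
      set g : ℝ → ℝ := fun x => lmax⁻¹ * f (lam i * x + t i) with hgdef
      have hg : LipschitzWith 1 g := by
        apply LipschitzWith.of_dist_le_mul
        intro x y
        have h1 := hf.dist_le_mul (lam i * x + t i) (lam i * y + t i)
        rw [Real.dist_eq, Real.dist_eq, NNReal.coe_one, one_mul] at h1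
        have h2 : lam i * x + t i - (lam i * y + t i) = lam i * (x - y) := by ring
        rw [h2, abs_mul] at h1
        rw [Real.dist_eq, Real.dist_eq, NNReal.coe_one, one_mul]
        have h3 : g x - g y = lmax⁻¹ * (f (lam i * x + t i) - f (lam i * y + t i)) := by
          rw [hgdef]; ring
        rw [h3, abs_mul, abs_of_pos (inv_pos.mpr hl0)]
        have h4 : lmax⁻¹ * |f (lam i * x + t i) - f (lam i * y + t i)|
            ≤ lmax⁻¹ * (|lam i| * |x - y|) :=
          mul_le_mul_of_nonneg_left h1 (le_of_lt (inv_pos.mpr hl0))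
        refine h4.trans ?_
        have h5 : lmax⁻¹ * |lam i| ≤ 1 := by
          rw [inv_mul_le_iff₀ hl0, mul_one]
          exact hlle i
        nlinarith [abs_nonneg (x - y)]
      have hgd : |∫ x, g x ∂μ - ∫ x, g x ∂ν| ≤ d := le_csSup hSbdd ⟨g, hg, rfl⟩
      have hμg : ∫ x, f (lam i * x + t i) ∂μ = lmax * ∫ x, g x ∂μ := by
        rw [hgdef]
        simp only [integral_const_mul]
        field_simp
      have hνg : ∫ x, f (lam i * x + t i) ∂ν = lmax * ∫ x, g x ∂ν := by
        rw [hgdef]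
        simp only [integral_const_mul]
        field_simp
      rw [hμg, hνg, ← mul_sub, abs_mul, abs_of_pos hl0]
      exact mul_le_mul_of_nonneg_left hgd (le_of_lt hl0)
    calc |∑ i : I, ((p i).toReal * ∫ x, f (lam i * x + t i) ∂μ
            - (p i).toReal * ∫ x, f (lam i * x + t i) ∂ν)|
        ≤ ∑ i : I, |(p i).toReal * ∫ x, f (lam i * x + t i) ∂μ
            - (p i).toReal * ∫ x, f (lam i * x + t i) ∂ν| :=
          Finset.abs_sum_le_sum_abs _ _
      _ ≤ ∑ i : I, (p i).toReal * (lmax * d) := by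
          refine Finset.sum_le_sum fun i _ => ?_
          rw [← mul_sub, abs_mul, abs_of_nonneg ENNReal.toReal_nonneg]
          exact mul_le_mul_of_nonneg_left (hterm i) ENNReal.toReal_nonneg
      _ = lmax * d := by rw [← Finset.sum_mul, hsum1, one_mul]
  have hdle : d ≤ lmax * d := csSup_le ⟨0, hS0⟩ hcontr
  have hd : d = 0 := le_antisymm (by nlinarith) hd0
  -- integrals of Lipschitz functions agree
  have hLip1 : ∀ f : ℝ → ℝ, LipschitzWith 1 f → ∫ x, f x ∂μ = ∫ x, f x ∂ν := by
    intro f hf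
    have h := le_csSup hSbdd ⟨f, hf, rfl⟩
    rw [← hddef, hd] at h
    have h0 := abs_nonpos_iff.mp h
    linarith
  have hLip : ∀ (L : NNReal) (f : ℝ → ℝ), LipschitzWith L f → ∫ x, f x ∂μ = ∫ x, f x ∂ν := by
    intro L f hf
    set c : ℝ := max (L : ℝ) 1 with hcdef
    have hc1 : (1 : ℝ) ≤ c := le_max_right _ _
    have hc0 : 0 < c := lt_of_lt_of_le one_pos hc1
    set g : ℝ → ℝ := fun x => c⁻¹ * f x with hgdef
    have hg : LipschitzWith 1 g := by
      apply LipschitzWith.of_dist_le_mul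
      intro x y
      have h1 := hf.dist_le_mul x y
      rw [Real.dist_eq, Real.dist_eq] at h1
      rw [Real.dist_eq, Real.dist_eq, NNReal.coe_one, one_mul]
      have h3 : g x - g y = c⁻¹ * (f x - f y) := by rw [hgdef]; ring
      rw [h3, abs_mul, abs_of_pos (inv_pos.mpr hc0)]
      have h4 : c⁻¹ * |f x - f y| ≤ c⁻¹ * ((L : ℝ) * |x - y|) :=
        mul_le_mul_of_nonneg_left h1 (le_of_lt (inv_pos.mpr hc0))
      refine h4.trans ?_
      have h5 : c⁻¹ * (L : ℝ) ≤ 1 := by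
        rw [inv_mul_le_iff₀ hc0, mul_one]
        exact le_max_left _ _
      nlinarith [abs_nonneg (x - y)]
    have hgeq := hLip1 g hg
    have hfg : ∀ x, f x = c * g x := by
      intro x; rw [hgdef]; field_simp
    calc ∫ x, f x ∂μ = ∫ x, c * g x ∂μ := by simp_rw [hfg]
      _ = c * ∫ x, g x ∂μ := integral_const_mul c g
      _ = c * ∫ x, g x ∂ν := by rw [hgeq]
      _ = ∫ x, c * g x ∂ν := (integral_const_mul c g).symm
      _ = ∫ x, f x ∂ν := by simp_rw [hfg]
  -- measures of closed sets agree
  have hclosed : ∀ F : Set ℝ, IsClosed F → μ F = ν F := by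
    intro F hF
    rcases F.eq_empty_or_nonempty with hFe | hFne
    · simp [hFe]
    set f : ℕ → ℝ → ℝ := fun n x => max 0 (1 - n * Metric.infDist x F) with hfdef
    have hfl : ∀ n : ℕ, LipschitzWith n (f n) := by
      intro n
      apply LipschitzWith.of_dist_le_mul
      intro x y
      have h1 : |Metric.infDist x F - Metric.infDist y F| ≤ |x - y| := by
        have := (Metric.lipschitz_infDist_pt F).dist_le_mul x y
        rw [Real.dist_eq, Real.dist_eq, NNReal.coe_one, one_mul] at this
        exact this
      rw [Real.dist_eq, Real.dist_eq]
      have h2 := abs_max_sub_max_le_abs (1 - n * Metric.infDist x F)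
        (1 - n * Metric.infDist y F) 0
      rw [max_comm _ (0:ℝ), max_comm (1 - (n:ℝ) * Metric.infDist y F) (0:ℝ)] at h2
      refine le_trans h2 ?_
      have h3 : (1 - (n:ℝ) * Metric.infDist x F) - (1 - n * Metric.infDist y F)
          = n * (Metric.infDist y F - Metric.infDist x F) := by ring
      rw [h3, abs_mul, Nat.abs_cast, abs_sub_comm]
      push_cast
      exact mul_le_mul_of_nonneg_left h1 (Nat.cast_nonneg n)
    have heq : ∀ n : ℕ, ∫ x, f n x ∂μ = ∫ x, f n x ∂ν := fun n => hLip n _ (hfl n)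
    have hlim : ∀ (τ : Measure ℝ), IsProbabilityMeasure τ →
        Filter.Tendsto (fun n => ∫ x, f n x ∂τ) Filter.atTop (nhds (τ F).toReal) := by
      intro τ hτp
      have hmain := MeasureTheory.tendsto_integral_of_dominated_convergence
        (F := fun n x => f n x) (f := F.indicator fun _ => (1:ℝ)) (bound := fun _ => (1:ℝ))
        (μ := τ)
        (fun n => (continuous_const.max (continuous_const.sub (continuous_const.mul
          (Metric.continuous_infDist_pt F)))).aestronglyMeasurable)
        (integrable_const 1) ?_ ?_
      · have : ∫ x, F.indicator (fun _ => (1:ℝ)) x ∂τ = (τ F).toReal := by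
          rw [integral_indicator_const (1:ℝ) hF.measurableSet]
          simp
          rfl
        rwa [this] at hmain
      · intro n
        filter_upwards with x
        rw [Real.norm_eq_abs, hfdef]
        have h0 : (0:ℝ) ≤ max 0 (1 - n * Metric.infDist x F) := le_max_left _ _
        rw [abs_of_nonneg h0]
        have : (1:ℝ) - n * Metric.infDist x F ≤ 1 := by
          have := Metric.infDist_nonneg (x := x) (s := F)
          nlinarith [Nat.cast_nonneg (α := ℝ) n]
        exact max_le zero_le_one this
      · filter_upwards with x
        by_cases hx : x ∈ F
        · have h0 : Metric.infDist x F = 0 := Metric.infDist_zero_of_mem hx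
          have : ∀ n : ℕ, f n x = 1 := by
            intro n; rw [hfdef]; simp [h0]
          rw [Set.indicator_of_mem hx]
          simp_rw [this]
          exact tendsto_const_nhds
        · have hpos : 0 < Metric.infDist x F :=
            (hF.notMem_iff_infDist_pos hFne).mp hx
          rw [Set.indicator_of_notMem hx]
          obtain ⟨N, hN⟩ := exists_nat_ge (Metric.infDist x F)⁻¹
          have hev : ∀ n ≥ N, f n x = 0 := by
            intro n hn
            rw [hfdef]
            have h1 : (Metric.infDist x F)⁻¹ ≤ (n : ℝ) :=
              hN.trans (Nat.cast_le.mpr hn)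
            have h2 : (1:ℝ) ≤ n * Metric.infDist x F := by
              rw [← inv_mul_cancel₀ (ne_of_gt hpos)]
              exact mul_le_mul_of_nonneg_right h1 (le_of_lt hpos)
            simp only [max_eq_left_iff]
            linarith
          refine Filter.Tendsto.congr' ?_ tendsto_const_nhds
          filter_upwards [Filter.eventually_ge_atTop N] with n hn
          exact (hev n hn).symm
    have h1 := hlim μ ‹_›
    have h2 := hlim ν ‹_›
    simp_rw [heq] at h1
    have := tendsto_nhds_unique h1 h2
    exact (ENNReal.toReal_eq_toReal_iff' (measure_ne_top μ F) (measure_ne_top ν F)).mp this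
  apply MeasureTheory.ext_of_generate_finite {s : Set ℝ | IsClosed s} ?_ isPiSystem_isClosed
    (fun F hF => hclosed F hF) (hclosed _ isClosed_univ)
  rw [BorelSpace.measurable_eq (α := ℝ), borel_eq_generateFrom_isClosed]
end

section
/- If μ is a non-atomic self-similar measure of an IFS {φ_i}_{i∈I} on ℝ (with all p_i > 0 and at least the attractor X not a point), then there exists M ∈ ℕ and words (i_1,…,i_M), (i'_1,…,i'_M) ∈ I^M such that the convex hulls of (φ_{i_1}∘⋯∘φ_{i_M})(X) and (φ_{i'_1}∘⋯∘φ_{i'_M})(X) are disjoint. -/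
open MeasureTheory

/-- Composition of an IFS along a word. -/
def compWord {I : Type*} (φ : I → ℝ → ℝ) : List I → ℝ → ℝ
  | [], x => x
  | i :: w, x => φ i (compWord φ w x)

private lemma compWord_replicate {I : Type*} (lam : ℝ) (t : I → ℝ) (i : I) (M : ℕ) (x : ℝ) :
    compWord (fun i x => lam * x + t i) (List.replicate M i) x
      = lam ^ M * x + t i * ∑ k ∈ Finset.range M, lam ^ k := by
  induction M with
  | zero => simp [compWord]
  | succ n ih =>
    rw [List.replicate_succ]
    show lam * compWord (fun i x => lam * x + t i) (List.replicate n i) x + t i = _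
    rw [ih, geom_sum_succ]
    ring



/-- If `μ` is a non-atomic self-similar measure (with all weights positive, supported on
the attractor `X`) of an equicontractive IFS `{φ_i(x) = λx + t_i}` on `ℝ`, then there
exist `M` and two words of length `M` whose cylinder images of `X` have disjoint convex
hulls. -/
theorem stmt_13 {I : Type*} [Fintype I] [Nonempty I]
    (lam : ℝ) (hlam : lam ∈ Set.Ioo (0:ℝ) 1) (t : I → ℝ)
    (X : Set ℝ) (hXne : X.Nonempty) (hXc : IsCompact X)
    (hX : X = ⋃ i : I, (fun x => lam * x + t i) '' X)
    (p : I → ENNReal) (hp : ∑ i, p i = 1) (hppos : ∀ i, 0 < p i)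
    (μ : Measure ℝ) [IsProbabilityMeasure μ]
    (hμ : μ = ∑ i : I, p i • Measure.map (fun x => lam * x + t i) μ)
    (hsupp : μ Xᶜ = 0)
    (hna : ∀ x : ℝ, μ {x} = 0) :
    ∃ (M : ℕ) (w w' : List I), w.length = M ∧ w'.length = M ∧
      Disjoint (convexHull ℝ (compWord (fun i x => lam * x + t i) w '' X))
        (convexHull ℝ (compWord (fun i x => lam * x + t i) w' '' X)) := by
  obtain ⟨hlam0, hlam1⟩ := hlam
  set a := sInf X with ha
  set b := sSup X with hb
  have hbddB : BddBelow X := hXc.bddBelow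
  have hbddA : BddAbove X := hXc.bddAbove
  have haX : a ∈ X := hXc.sInf_mem hXne
  have hbX : b ∈ X := hXc.sSup_mem hXne
  have hsub : X ⊆ Set.Icc a b := fun x hx => ⟨csInf_le hbddB hx, le_csSup hbddA hx⟩
  have hab : a ≤ b := (hsub haX).2
  -- there exist i j with t i < t j
  have hij : ∃ i j : I, t i < t j := by
    by_contra hcon
    push_neg at hcon
    have hteq : ∀ i j : I, t i = t j := fun i j => le_antisymm (hcon j i) (hcon i j)
    obtain ⟨i0⟩ := (inferInstance : Nonempty I)
    have hmem : ∀ x ∈ X, lam * x + t i0 ∈ X := by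
      intro x hx
      rw [hX]
      exact Set.mem_iUnion.2 ⟨i0, ⟨x, hx, rfl⟩⟩
    have hbrep : ∃ x ∈ X, b = lam * x + t i0 := by
      have : b ∈ ⋃ i : I, (fun x => lam * x + t i) '' X := hX ▸ hbX
      obtain ⟨i, ⟨x, hx, hxe⟩⟩ := Set.mem_iUnion.1 this
      exact ⟨x, hx, by rw [← hxe, hteq i i0]⟩
    have harep : ∃ x ∈ X, a = lam * x + t i0 := by
      have : a ∈ ⋃ i : I, (fun x => lam * x + t i) '' X := hX ▸ haX
      obtain ⟨i, ⟨x, hx, hxe⟩⟩ := Set.mem_iUnion.1 this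
      exact ⟨x, hx, by rw [← hxe, hteq i i0]⟩
    have hbeq : b = lam * b + t i0 := by
      obtain ⟨x, hx, hxe⟩ := hbrep
      have h1 : b ≤ lam * b + t i0 := by
        have := (hsub hx).2
        nlinarith
      have h2 : lam * b + t i0 ≤ b := (hsub (hmem b hbX)).2
      linarith
    have haeq : a = lam * a + t i0 := by
      obtain ⟨x, hx, hxe⟩ := harep
      have h1 : lam * a + t i0 ≤ a := by
        have := (hsub hx).1
        nlinarith
      have h2 : a ≤ lam * a + t i0 := (hsub (hmem a haX)).1
      linarith
    have hab' : a = b := by nlinarith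
    have hXsub : X ⊆ {a} := by
      intro x hx
      have := hsub hx
      rw [← hab'] at this
      exact le_antisymm this.2 this.1
    have h1 : (1 : ENNReal) ≤ μ X := by
      have : μ Set.univ ≤ μ X + μ Xᶜ := by
        rw [← Set.union_compl_self X]; exact measure_union_le _ _
      rw [hsupp, add_zero] at this
      simpa using this
    have h0 : μ X ≤ 0 := by
      calc μ X ≤ μ {a} := measure_mono hXsub
      _ = 0 := hna a
    simp [le_antisymm h0 zero_le] at h1
  obtain ⟨i, j, hij⟩ := hij
  -- choose M
  have hε : (0:ℝ) < (t j - t i) / (b - a + 1) := by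
    apply div_pos (by linarith) (by linarith)
  obtain ⟨N, hN⟩ := exists_pow_lt_of_lt_one hε hlam1
  have hND : lam ^ N * (b - a) < t j - t i := by
    have h1 : lam ^ N * (b - a + 1) < t j - t i :=
      (lt_div_iff₀ (by linarith : (0:ℝ) < b - a + 1)).1 hN
    nlinarith [pow_pos hlam0 N]
  set M := N + 1 with hM
  set S := ∑ k ∈ Finset.range M, lam ^ k with hS
  have hS1 : (1:ℝ) ≤ S := by
    rw [hS]
    calc (1:ℝ) = lam ^ 0 := by norm_num
    _ ≤ ∑ k ∈ Finset.range M, lam ^ k :=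
        Finset.single_le_sum (fun k _ => (pow_pos hlam0 k).le)
          (Finset.mem_range.2 (Nat.succ_pos N))
  have hMD : lam ^ M * (b - a) < (t j - t i) * S := by
    have h1 : lam ^ M * (b - a) ≤ lam ^ N * (b - a) := by
      have : lam ^ M ≤ lam ^ N := by
        rw [hM, pow_succ]
        nlinarith [pow_pos hlam0 N]
      nlinarith
    have h2 : t j - t i ≤ (t j - t i) * S := by nlinarith
    linarith
  have key : lam ^ M * b + t i * S < lam ^ M * a + t j * S := by nlinarith
  -- images contained in intervals
  have himg : ∀ k : I, compWord (fun i x => lam * x + t i) (List.replicate M k) '' X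
      ⊆ Set.Icc (lam ^ M * a + t k * S) (lam ^ M * b + t k * S) := by
    rintro k y ⟨x, hx, rfl⟩
    rw [compWord_replicate, ← hS]
    have hpow : (0:ℝ) ≤ lam ^ M := (pow_pos hlam0 M).le
    obtain ⟨h1, h2⟩ := hsub hx
    exact ⟨by nlinarith, by nlinarith⟩
  refine ⟨M, List.replicate M i, List.replicate M j,
    List.length_replicate, List.length_replicate, ?_⟩
  have hci : convexHull ℝ (compWord (fun i x => lam * x + t i) (List.replicate M i) '' X)
      ⊆ Set.Icc (lam ^ M * a + t i * S) (lam ^ M * b + t i * S) :=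
    convexHull_min (himg i) (convex_Icc _ _)
  have hcj : convexHull ℝ (compWord (fun i x => lam * x + t i) (List.replicate M j) '' X)
      ⊆ Set.Icc (lam ^ M * a + t j * S) (lam ^ M * b + t j * S) :=
    convexHull_min (himg j) (convex_Icc _ _)
  refine Set.disjoint_left.2 fun y hyi hyj => ?_
  have h1 := (hci hyi).2
  have h2 := (hcj hyj).1
  linarith
end
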